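/- Let H be a Hopf algebra over a field k and A a left H-module algebra, with smash product A # H. Then for every n ≥ 1 there is an isomorphism of H-H-bimodules (A # H)^{⊗_H n} ≅ A^{⊗n} ⊗ H, where H acts on A^{⊗n} ⊗ H on the left diagonally via the iterated comultiplication (acting on each tensor factor of A via the module-algebra action and on the factor H by left multiplication) and on the right by right multiplication on the factor H; explicitly, a # u ⊗_H b # v ⊗_H ⋯ ⊗_H c # w ↦ a ⊗ u₍₁₎·b ⊗ ⋯ ⊗ (u₍ₙ₋₁₎v₍ₙ₋₂₎⋯)·c ⊗ u₍ₙ₎v₍ₙ₋₁₎⋯w. -/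

import Mathlib

set_option linter.unusedSectionVars false

namespace SubalgDepth

open Function Finsupp MulOpposite

variable {k : Type*} [Field k] {A : Type*} [Ring A] [Algebra k A]

/-- The free `k`-module on `(n+1)`-tuples of elements of `A`; the relative tensor power
`A ⊗_B A ⊗_B ⋯ ⊗_B A` (`n+1` factors) is a quotient of this. -/
abbrev TF (k : Type*) [Field k] (A : Type*) [Ring A] (n : ℕ) : Type _ := ((Fin (n+1) → A) →₀ k)

/-- Relators: `k`-multilinearity and `B`-balancing at each adjacent pair of slots. -/
def relSet (B : Subalgebra k A) (n : ℕ) : Set (TF k A n) :=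
  { z | (∃ (v : Fin (n+1) → A) (i : Fin (n+1)) (x y : A),
      z = single (update v i (x+y)) 1 - single (update v i x) 1 - single (update v i y) 1)
   ∨ (∃ (v : Fin (n+1) → A) (i : Fin (n+1)) (c : k) (x : A),
      z = single (update v i (c • x)) 1 - c • single (update v i x) 1)
   ∨ (∃ (v : Fin (n+1) → A) (i : Fin n) (b : B),
      z = single (update v i.castSucc (v i.castSucc * (b : A))) 1
        - single (update v i.succ ((b : A) * v i.succ)) 1) }

noncomputable def Rel (B : Subalgebra k A) (n : ℕ) : Submodule k (TF k A n) := Submodule.span k (relSet B n)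

/-- The `(n+1)`-st relative tensor power `A^{⊗_B (n+1)}` of `A` over the subalgebra `B`. -/
def TP (B : Subalgebra k A) (n : ℕ) : Type _ := TF k A n ⧸ Rel B n

noncomputable instance (B : Subalgebra k A) (n : ℕ) : AddCommGroup (TP B n) :=
  inferInstanceAs (AddCommGroup (TF k A n ⧸ Rel B n))
noncomputable instance (B : Subalgebra k A) (n : ℕ) : Module k (TP B n) :=
  inferInstanceAs (Module k (TF k A n ⧸ Rel B n))

/-- The class of the pure tensor `v 0 ⊗ v 1 ⊗ ⋯ ⊗ v n` in `A^{⊗_B (n+1)}`. -/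
noncomputable def mk (B : Subalgebra k A) (n : ℕ) (v : Fin (n+1) → A) : TP B n :=
  Submodule.Quotient.mk (single v 1)

/-- Left multiplication by `a` on the first tensor factor, on the free module. -/
noncomputable def lF (n : ℕ) (a : A) : TF k A n →ₗ[k] TF k A n :=
  lmapDomain k k (fun v => update v 0 (a * v 0))

/-- Right multiplication by `a` on the last tensor factor, on the free module. -/
noncomputable def rF (n : ℕ) (a : A) : TF k A n →ₗ[k] TF k A n :=
  lmapDomain k k (fun v => update v (Fin.last n) (v (Fin.last n) * a))

lemma lF_single (n : ℕ) (a : A) (v : Fin (n+1) → A) (c : k) :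
    lF (k := k) n a (single v c) = single (update v 0 (a * v 0)) c := by
  simp [lF, lmapDomain_apply, mapDomain_single]

lemma rF_single (n : ℕ) (a : A) (v : Fin (n+1) → A) (c : k) :
    rF (k := k) n a (single v c) = single (update v (Fin.last n) (v (Fin.last n) * a)) c := by
  simp [rF, lmapDomain_apply, mapDomain_single]

private lemma upd0 (n : ℕ) (a : A) (v : Fin (n+1) → A) {i : Fin (n+1)} (hi : i ≠ 0) (z : A) :
    update (update v i z) 0 (a * (update v i z) 0) = update (update v 0 (a * v 0)) i z := by
  rw [Function.update_of_ne (Ne.symm hi), Function.update_comm (Ne.symm hi)]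

private lemma updl (n : ℕ) (a : A) (v : Fin (n+1) → A) {i : Fin (n+1)} (hi : i ≠ Fin.last n)
    (z : A) :
    update (update v i z) (Fin.last n) ((update v i z) (Fin.last n) * a)
      = update (update v (Fin.last n) (v (Fin.last n) * a)) i z := by
  rw [Function.update_of_ne (Ne.symm hi), Function.update_comm (Ne.symm hi)]

lemma lF_le (B : Subalgebra k A) (n : ℕ) (a : A) :
    Rel B n ≤ (Rel B n).comap (lF (k := k) n a) := by
  rw [Rel, Submodule.span_le]
  rintro z (⟨v, i, x, y, rfl⟩ | ⟨v, i, c, x, rfl⟩ | ⟨v, i, b, rfl⟩)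
  · simp only [SetLike.mem_coe, Set.mem_setOf_eq, Submodule.mem_comap, map_sub, lF_single]
    apply Submodule.subset_span
    by_cases hi : i = 0
    · subst hi
      have h1 : update (update v 0 (x+y)) 0 (a * (update v 0 (x+y)) 0)
          = update v 0 (a*x + a*y) := by simp [mul_add]
      have h2 : update (update v 0 x) 0 (a * (update v 0 x) 0) = update v 0 (a*x) := by simp
      have h3 : update (update v 0 y) 0 (a * (update v 0 y) 0) = update v 0 (a*y) := by simp
      rw [h1, h2, h3]
      exact Or.inl ⟨v, 0, a*x, a*y, rfl⟩
    · rw [upd0 n a v hi, upd0 n a v hi, upd0 n a v hi]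
      exact Or.inl ⟨update v 0 (a * v 0), i, x, y, rfl⟩
  · simp only [SetLike.mem_coe, Set.mem_setOf_eq, Submodule.mem_comap, map_sub, map_smul, lF_single]
    apply Submodule.subset_span
    by_cases hi : i = 0
    · subst hi
      have h1 : update (update v 0 (c • x)) 0 (a * (update v 0 (c • x)) 0)
          = update v 0 (c • (a * x)) := by simp [mul_smul_comm]
      have h2 : update (update v 0 x) 0 (a * (update v 0 x) 0) = update v 0 (a*x) := by simp
      rw [h1, h2]
      exact Or.inr (Or.inl ⟨v, 0, c, a*x, rfl⟩)
    · rw [upd0 n a v hi, upd0 n a v hi]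
      exact Or.inr (Or.inl ⟨update v 0 (a * v 0), i, c, x, rfl⟩)
  · simp only [SetLike.mem_coe, Set.mem_setOf_eq, Submodule.mem_comap, map_sub, lF_single]
    apply Submodule.subset_span
    have h2 : update (update v i.succ ((b:A) * v i.succ)) 0
          (a * (update v i.succ ((b:A) * v i.succ)) 0)
        = update (update v 0 (a * v 0)) i.succ
            ((b:A) * (update v 0 (a * v 0)) i.succ) := by
      rw [upd0 n a v (Fin.succ_ne_zero i), Function.update_of_ne (Fin.succ_ne_zero i)]
    by_cases hi : i.castSucc = 0
    · have h1 : update (update v i.castSucc (v i.castSucc * (b:A))) 0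
            (a * (update v i.castSucc (v i.castSucc * (b:A))) 0)
          = update (update v 0 (a * v 0)) i.castSucc
              ((update v 0 (a * v 0)) i.castSucc * (b:A)) := by
        rw [hi]; simp [mul_assoc]
      rw [h1, h2]
      exact Or.inr (Or.inr ⟨update v 0 (a * v 0), i, b, rfl⟩)
    · have h1 : update (update v i.castSucc (v i.castSucc * (b:A))) 0
            (a * (update v i.castSucc (v i.castSucc * (b:A))) 0)
          = update (update v 0 (a * v 0)) i.castSucc
              ((update v 0 (a * v 0)) i.castSucc * (b:A)) := by
        rw [upd0 n a v hi, Function.update_of_ne hi]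
      rw [h1, h2]
      exact Or.inr (Or.inr ⟨update v 0 (a * v 0), i, b, rfl⟩)

lemma rF_le (B : Subalgebra k A) (n : ℕ) (a : A) :
    Rel B n ≤ (Rel B n).comap (rF (k := k) n a) := by
  rw [Rel, Submodule.span_le]
  rintro z (⟨v, i, x, y, rfl⟩ | ⟨v, i, c, x, rfl⟩ | ⟨v, i, b, rfl⟩)
  · simp only [SetLike.mem_coe, Set.mem_setOf_eq, Submodule.mem_comap, map_sub, rF_single]
    apply Submodule.subset_span
    by_cases hi : i = Fin.last n
    · subst hi
      have h1 : update (update v (Fin.last n) (x+y)) (Fin.last n)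
            ((update v (Fin.last n) (x+y)) (Fin.last n) * a)
          = update v (Fin.last n) (x*a + y*a) := by simp [add_mul]
      have h2 : update (update v (Fin.last n) x) (Fin.last n)
            ((update v (Fin.last n) x) (Fin.last n) * a) = update v (Fin.last n) (x*a) := by simp
      have h3 : update (update v (Fin.last n) y) (Fin.last n)
            ((update v (Fin.last n) y) (Fin.last n) * a) = update v (Fin.last n) (y*a) := by simp
      rw [h1, h2, h3]
      exact Or.inl ⟨v, Fin.last n, x*a, y*a, rfl⟩
    · rw [updl n a v hi, updl n a v hi, updl n a v hi]
      exact Or.inl ⟨update v (Fin.last n) (v (Fin.last n) * a), i, x, y, rfl⟩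
  · simp only [SetLike.mem_coe, Set.mem_setOf_eq, Submodule.mem_comap, map_sub, map_smul, rF_single]
    apply Submodule.subset_span
    by_cases hi : i = Fin.last n
    · subst hi
      have h1 : update (update v (Fin.last n) (c • x)) (Fin.last n)
            ((update v (Fin.last n) (c • x)) (Fin.last n) * a)
          = update v (Fin.last n) (c • (x * a)) := by simp [smul_mul_assoc]
      have h2 : update (update v (Fin.last n) x) (Fin.last n)
            ((update v (Fin.last n) x) (Fin.last n) * a) = update v (Fin.last n) (x*a) := by simp
      rw [h1, h2]
      exact Or.inr (Or.inl ⟨v, Fin.last n, c, x*a, rfl⟩)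
    · rw [updl n a v hi, updl n a v hi]
      exact Or.inr (Or.inl ⟨update v (Fin.last n) (v (Fin.last n) * a), i, c, x, rfl⟩)
  · simp only [SetLike.mem_coe, Set.mem_setOf_eq, Submodule.mem_comap, map_sub, rF_single]
    apply Submodule.subset_span
    have hcs : i.castSucc ≠ Fin.last n := (Fin.castSucc_lt_last i).ne
    have h1 : update (update v i.castSucc (v i.castSucc * (b:A))) (Fin.last n)
          ((update v i.castSucc (v i.castSucc * (b:A))) (Fin.last n) * a)
        = update (update v (Fin.last n) (v (Fin.last n) * a)) i.castSucc
            ((update v (Fin.last n) (v (Fin.last n) * a)) i.castSucc * (b:A)) := by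
      rw [updl n a v hcs, Function.update_of_ne hcs]
    by_cases hi : i.succ = Fin.last n
    · have h2 : update (update v i.succ ((b:A) * v i.succ)) (Fin.last n)
            ((update v i.succ ((b:A) * v i.succ)) (Fin.last n) * a)
          = update (update v (Fin.last n) (v (Fin.last n) * a)) i.succ
              ((b:A) * (update v (Fin.last n) (v (Fin.last n) * a)) i.succ) := by
        rw [hi]; simp [mul_assoc]
      rw [h1, h2]
      exact Or.inr (Or.inr ⟨update v (Fin.last n) (v (Fin.last n) * a), i, b, rfl⟩)
    · have h2 : update (update v i.succ ((b:A) * v i.succ)) (Fin.last n)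
            ((update v i.succ ((b:A) * v i.succ)) (Fin.last n) * a)
          = update (update v (Fin.last n) (v (Fin.last n) * a)) i.succ
              ((b:A) * (update v (Fin.last n) (v (Fin.last n) * a)) i.succ) := by
        rw [updl n a v hi, Function.update_of_ne hi]
      rw [h1, h2]
      exact Or.inr (Or.inr ⟨update v (Fin.last n) (v (Fin.last n) * a), i, b, rfl⟩)

/-- Left multiplication by `a ∈ A` on the first factor of `A^{⊗_B (n+1)}`. -/
noncomputable def Lmul (B : Subalgebra k A) (n : ℕ) (a : A) : TP B n →ₗ[k] TP B n :=
  Submodule.mapQ _ _ (lF n a) (lF_le B n a)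

/-- Right multiplication by `a ∈ A` on the last factor of `A^{⊗_B (n+1)}`. -/
noncomputable def Rmul (B : Subalgebra k A) (n : ℕ) (a : A) : TP B n →ₗ[k] TP B n :=
  Submodule.mapQ _ _ (rF n a) (rF_le B n a)

/-- `A^{⊗_B (m+1)} | q ⋅ A^{⊗_B (m'+1)}` as bimodules, where the left scalars are taken in
`SL ⊆ A` and the right scalars in `SR ⊆ A`:  there is a split additive (hence `k`-linear)
embedding commuting with the left multiplications by elements of `SL` on the first tensorand
and right multiplications by elements of `SR` on the last tensorand. -/
def TPdvd (B : Subalgebra k A) (m m' q : ℕ) (SL SR : Set A) : Prop :=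
  ∃ (f : TP B m →+ (Fin q → TP B m')) (g : (Fin q → TP B m') →+ TP B m),
    (∀ a ∈ SL, ∀ x, f (Lmul B m a x) = fun j => Lmul B m' a (f x j)) ∧
    (∀ a ∈ SR, ∀ x, f (Rmul B m a x) = fun j => Rmul B m' a (f x j)) ∧
    (∀ a ∈ SL, ∀ y, g (fun j => Lmul B m' a (y j)) = Lmul B m a (g y)) ∧
    (∀ a ∈ SR, ∀ y, g (fun j => Rmul B m' a (y j)) = Rmul B m a (g y)) ∧
    (∀ x, g (f x) = x)

/-- Depth `1`: `A | q ⋅ B` as `B`-`B`-bimodules. -/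
def hasDepth1 (B : Subalgebra k A) : Prop :=
  ∃ (q : ℕ) (f : TP B 0 →+ (Fin q → B)) (g : (Fin q → B) →+ TP B 0),
    (∀ (b : B) x, f (Lmul B 0 (b:A) x) = fun j => b * f x j) ∧
    (∀ (b : B) x, f (Rmul B 0 (b:A) x) = fun j => f x j * b) ∧
    (∀ (b : B) y, g (fun j => b * y j) = Lmul B 0 (b:A) (g y)) ∧
    (∀ (b : B) y, g (fun j => y j * b) = Rmul B 0 (b:A) (g y)) ∧
    (∀ x, g (f x) = x)

/-- `B ⊆ A` has depth `2n+1`:  `A^{⊗_B (n+1)} | q ⋅ A^{⊗_B n}` as `B`-`B`-bimodules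
(`A | q ⋅ B` when `n = 0`). -/
def hasOddDepth (B : Subalgebra k A) : ℕ → Prop
  | 0 => hasDepth1 B
  | n+1 => ∃ q, TPdvd B (n+1) n q (B : Set A) (B : Set A)

/-- `B ⊆ A` has left depth `2n` (`n ≥ 1`): `A^{⊗_B (n+1)} | q ⋅ A^{⊗_B n}` as
`B`-`A`-bimodules. -/
def hasLeftEvenDepth (B : Subalgebra k A) : ℕ → Prop
  | 0 => False
  | n+1 => ∃ q, TPdvd B (n+1) n q (B : Set A) Set.univ

/-- `B ⊆ A` has right depth `2n` (`n ≥ 1`): `A^{⊗_B (n+1)} | q ⋅ A^{⊗_B n}` as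
`A`-`B`-bimodules. -/
def hasRightEvenDepth (B : Subalgebra k A) : ℕ → Prop
  | 0 => False
  | n+1 => ∃ q, TPdvd B (n+1) n q Set.univ (B : Set A)

/-- `B ⊆ A` has depth `m`. -/
def hasDepth (B : Subalgebra k A) (m : ℕ) : Prop :=
  (∃ n, m = 2*n+1 ∧ hasOddDepth B n) ∨
  (∃ n, m = 2*n ∧ (hasLeftEvenDepth B n ∨ hasRightEvenDepth B n))

/-- The minimum depth `d(B, A) ∈ ℕ ∪ {∞}` of the subalgebra pair `B ⊆ A`. -/
noncomputable def minDepth (B : Subalgebra k A) : ℕ∞ :=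
  sInf {m : ℕ∞ | ∃ j : ℕ, m = j ∧ hasDepth B j}

/-- The minimum odd depth: the least odd integer `≥ d(B, A)`. -/
noncomputable def minOddDepth (B : Subalgebra k A) : ℕ∞ :=
  sInf {m : ℕ∞ | ∃ j : ℕ, m = j ∧ Odd j ∧ minDepth B ≤ j}

end SubalgDepth

namespace HopfModDepth

open MulOpposite TensorProduct

universe u

variable (k H : Type u) [Field k] [Ring H] [Bialgebra k H]

/-- A left `H`-module over the `k`-bialgebra `H`: a `k`-vector space together with a
`k`-algebra map `H → End_k V`. -/
structure LVec : Type (u+1) where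
  V : Type u
  [acg : AddCommGroup V]
  [mod : Module k V]
  ρ : H →ₐ[k] Module.End k V

attribute [instance] LVec.acg LVec.mod

variable {k H}

/-- The tensor product of two left `H`-modules, with the diagonal left `H`-action
`h · (m ⊗ n) = Σ (h₍₁₎ · m) ⊗ (h₍₂₎ · n)`. -/
noncomputable def LVec.tmul (M N : LVec k H) : LVec k H where
  V := TensorProduct k M.V N.V
  ρ := (Module.endTensorEndAlgHom (R := k) (S := k) (A := k)).comp
        ((Algebra.TensorProduct.map M.ρ N.ρ).comp (Bialgebra.comulAlgHom k H))

/-- The trivial left `H`-module `k_ε` given by the counit. -/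
noncomputable def LVec.triv : LVec k H where
  V := k
  ρ := (Algebra.ofId k (Module.End k k)).comp (Bialgebra.counitAlgHom k H)

/-- Direct sum (finite product) of left `H`-modules. -/
noncomputable def LVec.pi {m : ℕ} (F : Fin m → LVec k H) : LVec k H where
  V := ∀ i, (F i).V
  ρ :=
  { toFun := fun x => LinearMap.pi (fun i => ((F i).ρ x).comp (LinearMap.proj i))
    map_one' := LinearMap.ext fun v => funext fun i => by simp
    map_mul' := fun x y => LinearMap.ext fun v => funext fun i => by simp
    map_zero' := LinearMap.ext fun v => funext fun i => by simp
    map_add' := fun x y => LinearMap.ext fun v => funext fun i => by simp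
    commutes' := fun r => LinearMap.ext fun v => funext fun i => by
      simp only [LinearMap.pi_apply, LinearMap.comp_apply, LinearMap.proj_apply,
        AlgHom.commutes, Module.algebraMap_end_apply]
      rfl }

/-- `q` copies of a left `H`-module. -/
noncomputable def LVec.copies (q : ℕ) (N : LVec k H) : LVec k H := LVec.pi (fun _ : Fin q => N)

/-- Tensor powers: `tpow W n = W^{⊗(n+1)}`. -/
noncomputable def LVec.tpow (W : LVec k H) : ℕ → LVec k H
  | 0 => W
  | n+1 => (W.tpow n).tmul W

/-- `Tsum W n = T_{n+1}(W) = W ⊕ W^{⊗2} ⊕ ⋯ ⊕ W^{⊗(n+1)}`. -/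
noncomputable def LVec.Tsum (W : LVec k H) (n : ℕ) : LVec k H :=
  LVec.pi (fun i : Fin (n+1) => W.tpow i)

/-- `M | N` for left `H`-modules: `M` is isomorphic to a direct summand of `N`. -/
def LVec.Dvd (M N : LVec k H) : Prop :=
  ∃ (f : M.V →ₗ[k] N.V) (g : N.V →ₗ[k] M.V),
    (∀ x v, f (M.ρ x v) = N.ρ x (f v)) ∧
    (∀ x w, g (N.ρ x w) = M.ρ x (g w)) ∧
    (∀ v, g (f v) = v)

/-- Isomorphism of left `H`-modules. -/
def LVec.Iso (M N : LVec k H) : Prop :=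
  ∃ (f : M.V →ₗ[k] N.V) (g : N.V →ₗ[k] M.V),
    (∀ x v, f (M.ρ x v) = N.ρ x (f v)) ∧
    (∀ x w, g (N.ρ x w) = M.ρ x (g w)) ∧
    (∀ v, g (f v) = v) ∧ (∀ w, f (g w) = w)

/-- A left `H`-module `W` has depth `n`. -/
def LVec.hasDepth (W : LVec k H) : ℕ → Prop
  | 0 => ∃ q, W.Iso (LVec.copies q (LVec.triv (k := k) (H := H)))
  | n+1 => ∃ q, (W.Tsum (n+1)).Dvd (LVec.copies q (W.Tsum n))

/-- The minimum depth `d(W, {}_H𝓜)` of the left `H`-module `W`. -/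
noncomputable def LVec.minDepth (W : LVec k H) : ℕ∞ :=
  sInf {m : ℕ∞ | ∃ j : ℕ, m = j ∧ W.hasDepth j}

end HopfModDepth

namespace Smash

open MulOpposite TensorProduct HopfModDepth

universe u

variable (k H A : Type u) [Field k] [Ring H] [Bialgebra k H] [Ring A] [Algebra k A]

/-- For an action `ρ` of `H` on `A`, the map `ν : H ⊗ A → A ⊗ H`,
`h ⊗ a ↦ Σ (h₍₁₎ · a) ⊗ h₍₂₎`. -/
noncomputable def nu (ρ : H →ₐ[k] Module.End k A) : (H ⊗[k] A) →ₗ[k] (A ⊗[k] H) :=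
  (LinearMap.rTensor H (TensorProduct.lift ρ.toLinearMap)) ∘ₗ
    (TensorProduct.assoc k H A H).symm.toLinearMap ∘ₗ
    (LinearMap.lTensor H (TensorProduct.comm k H A).toLinearMap) ∘ₗ
    (TensorProduct.assoc k H H A).toLinearMap ∘ₗ
    (LinearMap.rTensor A (Bialgebra.comulAlgHom k H).toLinearMap)

/-- `ρ` makes `A` a left `H`-module algebra: `h · 1 = ε(h)1` and
`h · (ab) = Σ (h₍₁₎ · a)(h₍₂₎ · b)` (the right-hand side being multiplication composed with
the diagonal action of `h` on `A ⊗ A`). -/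
def IsModuleAlgebra (ρ : H →ₐ[k] Module.End k A) : Prop :=
  (∀ h : H, ρ h 1 = Bialgebra.counitAlgHom k H h • (1 : A)) ∧
  (∀ h : H, ρ h ∘ₗ LinearMap.mul' k A
    = (LinearMap.mul' k A) ∘ₗ
      ((({ V := A, ρ := ρ } : LVec k H).tmul ({ V := A, ρ := ρ } : LVec k H)).ρ h))

/-- Data exhibiting `S` as the smash product `A # H`: a linear equivalence `A ⊗ H ≃ S`
carrying the unit to the unit and satisfying the smash-product multiplication rules
`(a#h)(b#h') = a(h₍₁₎·b) # h₍₂₎h'` on a spanning set. -/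
structure SmashData (ρ : H →ₐ[k] Module.End k A) (S : Type u) [Ring S] [Algebra k S] :
    Type u where
  e : (A ⊗[k] H) ≃ₗ[k] S
  unit : e ((1 : A) ⊗ₜ[k] (1 : H)) = 1
  mulAA : ∀ a b : A, e (a ⊗ₜ[k] 1) * e (b ⊗ₜ[k] 1) = e ((a * b) ⊗ₜ[k] 1)
  mulHH : ∀ h h' : H, e ((1:A) ⊗ₜ[k] h) * e ((1:A) ⊗ₜ[k] h') = e ((1:A) ⊗ₜ[k] (h * h'))
  mulAH : ∀ (a : A) (h : H), e (a ⊗ₜ[k] (1:H)) * e ((1:A) ⊗ₜ[k] h) = e (a ⊗ₜ[k] h)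
  mulHA : ∀ (h : H) (a : A),
    e ((1:A) ⊗ₜ[k] h) * e (a ⊗ₜ[k] (1:H)) = e (nu k H A ρ (h ⊗ₜ[k] a))

end Smash

namespace HopfModDepth

open TensorProduct

universe u

variable {k H : Type u} [Field k] [Ring H] [Bialgebra k H]

/-- Pure tensors in the tensor powers of a left `H`-module:
`tprod W n a = a 0 ⊗ a 1 ⊗ ⋯ ⊗ a n ∈ W^{⊗(n+1)}`. -/
noncomputable def LVec.tprod (W : LVec k H) : ∀ n : ℕ, (Fin (n+1) → W.V) → (W.tpow n).V
  | 0, a => a 0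
  | n+1, a => ((W.tprod n) (fun i => a i.castSucc)) ⊗ₜ[k] (a (Fin.last (n+1)))

/-- The left regular `H`-module. -/
noncomputable def LVec.regular (k H : Type u) [Field k] [Ring H] [Bialgebra k H] :
    LVec k H :=
  { V := H, ρ := Algebra.lmul k H }

end HopfModDepth

set_option maxHeartbeats 1000000
set_option synthInstance.maxHeartbeats 200000

namespace SmashProof

open HopfModDepth Smash TensorProduct SubalgDepth Function Finsupp

universe u

variable {k H A S : Type u} [Field k] [Ring H] [Bialgebra k H]
  [Ring A] [Algebra k A] [Ring S] [Algebra k S]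


/-- The twofold action map, as a linear map in the comultiplied variable. -/
noncomputable def act2 (M N : LVec k H) :
    (H ⊗[k] H) →ₗ[k] (TensorProduct k M.V N.V →ₗ[k] TensorProduct k M.V N.V) :=
  ((Module.endTensorEndAlgHom (R := k) (S := k) (A := k)).comp
    (Algebra.TensorProduct.map M.ρ N.ρ)).toLinearMap

lemma act2_tmul (M N : LVec k H) (x y : H) :
    act2 M N (x ⊗ₜ[k] y) = TensorProduct.map (M.ρ x) (N.ρ y) := by
  simp only [act2, AlgHom.toLinearMap_apply, AlgHom.comp_apply,
    Algebra.TensorProduct.map_tmul, Module.endTensorEndAlgHom_apply]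
  exact TensorProduct.ext' fun m n => rfl

lemma tmul_rho (M N : LVec k H) (h : H) (z : TensorProduct k M.V N.V) :
    (M.tmul N).ρ h z = act2 M N (Coalgebra.comul h) z := rfl

lemma act2_lTensor (M Y Z : LVec k H) (f : Y.V →ₗ[k] Z.V)
    (hf : ∀ x y, f (Y.ρ x y) = Z.ρ x (f y)) (c : H ⊗[k] H) (t : TensorProduct k M.V Y.V) :
    act2 M Z c (LinearMap.lTensor M.V f t)
      = LinearMap.lTensor M.V f (act2 M Y c t) := by
  induction c using TensorProduct.induction_on with
  | zero => simp only [map_zero, LinearMap.zero_apply, map_zero]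
  | tmul x y =>
    rw [act2_tmul, act2_tmul]
    induction t using TensorProduct.induction_on with
    | zero => simp only [map_zero]
    | tmul m w => simp only [TensorProduct.map_tmul, LinearMap.lTensor_tmul, hf]
    | add t₁ t₂ h₁ h₂ => simp only [map_add, h₁, h₂]
  | add c₁ c₂ h₁ h₂ => simp only [map_add, LinearMap.add_apply, h₁, h₂]

lemma lTensor_equivariant (M Y Z : LVec k H) (f : Y.V →ₗ[k] Z.V)
    (hf : ∀ x y, f (Y.ρ x y) = Z.ρ x (f y)) (h : H) (t : TensorProduct k M.V Y.V) :
    (M.tmul Z).ρ h (LinearMap.lTensor M.V f t)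
      = LinearMap.lTensor M.V f ((M.tmul Y).ρ h t) :=
  act2_lTensor M Y Z f hf (Coalgebra.comul h) t

/-- Threefold action, left-bracketed. -/
noncomputable def act3L (M N P : LVec k H) :
    ((H ⊗[k] H) ⊗[k] H) →ₗ[k]
      (TensorProduct k (TensorProduct k M.V N.V) P.V →ₗ[k]
        TensorProduct k (TensorProduct k M.V N.V) P.V) :=
  (TensorProduct.homTensorHomMap (RingHom.id k) _ _ _ _) ∘ₗ
    (TensorProduct.map (act2 M N) P.ρ.toLinearMap)

/-- Threefold action, right-bracketed. -/
noncomputable def act3R (M N P : LVec k H) :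
    (H ⊗[k] (H ⊗[k] H)) →ₗ[k]
      (TensorProduct k M.V (TensorProduct k N.V P.V) →ₗ[k]
        TensorProduct k M.V (TensorProduct k N.V P.V)) :=
  (TensorProduct.homTensorHomMap (RingHom.id k) _ _ _ _) ∘ₗ
    (TensorProduct.map M.ρ.toLinearMap (act2 N P))

lemma act3L_tmul (M N P : LVec k H) (c : H ⊗[k] H) (y : H) :
    act3L M N P (c ⊗ₜ[k] y) = TensorProduct.map (act2 M N c) (P.ρ y) := by
  simp [act3L]

lemma act3R_tmul (M N P : LVec k H) (x : H) (c : H ⊗[k] H) :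
    act3R M N P (x ⊗ₜ[k] c) = TensorProduct.map (M.ρ x) (act2 N P c) := by
  simp [act3R]

lemma act2_left (M N P : LVec k H) (c : H ⊗[k] H)
    (z : TensorProduct k (TensorProduct k M.V N.V) P.V) :
    act2 (M.tmul N) P c z
      = act3L M N P ((Coalgebra.comul (R := k)).rTensor H c) z := by
  induction c using TensorProduct.induction_on with
  | zero => simp only [map_zero, LinearMap.zero_apply]; rfl
  | tmul x y =>
    rw [act2_tmul, LinearMap.rTensor_tmul, act3L_tmul]
    induction z using TensorProduct.induction_on with
    | zero => exact map_zero _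
    | tmul w p =>
      simp only [TensorProduct.map_tmul]
      exact congrArg (· ⊗ₜ[k] (P.ρ y) p) (tmul_rho M N x w)
    | add z₁ z₂ g₁ g₂ => rw [map_add, ← g₁, ← g₂]; exact map_add _ _ _
  | add c₁ c₂ h₁ h₂ => rw [map_add, map_add, map_add]; exact congrArg₂ (· + ·) h₁ h₂

lemma act2_right (M N P : LVec k H) (c : H ⊗[k] H)
    (z : TensorProduct k M.V (TensorProduct k N.V P.V)) :
    act2 M (N.tmul P) c z
      = act3R M N P ((Coalgebra.comul (R := k)).lTensor H c) z := by
  induction c using TensorProduct.induction_on with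
  | zero => simp only [map_zero, LinearMap.zero_apply]; rfl
  | tmul x y =>
    rw [act2_tmul, LinearMap.lTensor_tmul, act3R_tmul]
    induction z using TensorProduct.induction_on with
    | zero => exact map_zero _
    | tmul m w =>
      simp only [TensorProduct.map_tmul]
      exact congrArg ((M.ρ x) m ⊗ₜ[k] ·) (tmul_rho N P y w)
    | add z₁ z₂ g₁ g₂ => rw [map_add, ← g₁, ← g₂]; exact map_add _ _ _
  | add c₁ c₂ h₁ h₂ => rw [map_add, map_add, map_add]; exact congrArg₂ (· + ·) h₁ h₂

lemma act3_assoc (M N P : LVec k H) (c₃ : (H ⊗[k] H) ⊗[k] H)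
    (z : TensorProduct k (TensorProduct k M.V N.V) P.V) :
    TensorProduct.assoc k M.V N.V P.V (act3L M N P c₃ z)
      = act3R M N P (TensorProduct.assoc k H H H c₃)
          (TensorProduct.assoc k M.V N.V P.V z) := by
  induction c₃ using TensorProduct.induction_on with
  | zero => simp only [map_zero, LinearMap.zero_apply, map_zero]
  | tmul t y =>
    induction t using TensorProduct.induction_on with
    | zero =>
      simp only [TensorProduct.zero_tmul, map_zero, LinearMap.zero_apply]
    | tmul x x' =>
      rw [act3L_tmul, assoc_tmul, act3R_tmul, act2_tmul, act2_tmul]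
      induction z using TensorProduct.induction_on with
      | zero => simp only [map_zero]
      | tmul w p =>
        induction w using TensorProduct.induction_on with
        | zero => simp only [TensorProduct.zero_tmul, map_zero]
        | tmul m n => simp only [TensorProduct.map_tmul, assoc_tmul]
        | add w₁ w₂ g₁ g₂ =>
          simp only [TensorProduct.add_tmul, map_add, g₁, g₂]
      | add z₁ z₂ g₁ g₂ => simp only [map_add, g₁, g₂]
    | add t₁ t₂ g₁ g₂ =>
      simp only [TensorProduct.add_tmul, map_add, LinearMap.add_apply, g₁, g₂]
  | add c₁ c₂ h₁ h₂ => simp only [map_add, LinearMap.add_apply, h₁, h₂]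

/-- Associativity of the diagonal action (coassociativity). -/
lemma assoc_rho (M N P : LVec k H) (h : H)
    (z : TensorProduct k (TensorProduct k M.V N.V) P.V) :
    TensorProduct.assoc k M.V N.V P.V (((M.tmul N).tmul P).ρ h z)
      = (M.tmul (N.tmul P)).ρ h (TensorProduct.assoc k M.V N.V P.V z) := by
  have e1 : ((M.tmul N).tmul P).ρ h z
      = act3L M N P ((Coalgebra.comul (R := k)).rTensor H (Coalgebra.comul h)) z :=
    act2_left M N P (Coalgebra.comul h) z
  have e2 : (M.tmul (N.tmul P)).ρ h (TensorProduct.assoc k M.V N.V P.V z)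
      = act3R M N P ((Coalgebra.comul (R := k)).lTensor H (Coalgebra.comul h))
          (TensorProduct.assoc k M.V N.V P.V z) :=
    act2_right M N P (Coalgebra.comul h) _
  rw [e1, e2, ← Coalgebra.coassoc_apply]
  exact act3_assoc M N P _ z


variable {ρ : H →ₐ[k] Module.End k A}

/-- The module-algebra `LVec`. -/
abbrev WA (ρ : H →ₐ[k] Module.End k A) : LVec k H := { V := A, ρ := ρ }

lemma reg_rho_apply (x u : H) : (LVec.regular k H).ρ x u = x * u := rfl

lemma nu_apply (h : H) (a : A) :
    nu k H A ρ (h ⊗ₜ[k] a)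
      = (LinearMap.rTensor H (TensorProduct.lift ρ.toLinearMap))
          ((TensorProduct.assoc k H A H).symm
            ((LinearMap.lTensor H (TensorProduct.comm k H A).toLinearMap)
              ((TensorProduct.assoc k H H A) ((Coalgebra.comul h) ⊗ₜ[k] a)))) := by
  simp only [nu, LinearMap.coe_comp, Function.comp_apply, LinearEquiv.coe_coe,
    LinearMap.rTensor_tmul, AlgHom.toLinearMap_apply]
  rfl

lemma nu_D0 (a : A) (u : H) (c : H ⊗[k] H) :
    act2 (WA ρ) (LVec.regular k H) c (a ⊗ₜ[k] u)
      = LinearMap.lTensor A (LinearMap.mulRight k u)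
          ((LinearMap.rTensor H (TensorProduct.lift ρ.toLinearMap))
            ((TensorProduct.assoc k H A H).symm
              ((LinearMap.lTensor H (TensorProduct.comm k H A).toLinearMap)
                ((TensorProduct.assoc k H H A) (c ⊗ₜ[k] a))))) := by
  induction c using TensorProduct.induction_on with
  | zero => simp only [map_zero, LinearMap.zero_apply, TensorProduct.zero_tmul, map_zero]; rfl
  | tmul x y =>
    rw [act2_tmul]
    simp only [TensorProduct.map_tmul, assoc_tmul, LinearMap.lTensor_tmul,
      TensorProduct.comm_tmul, LinearEquiv.coe_coe, TensorProduct.assoc_symm_tmul,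
      LinearMap.rTensor_tmul, TensorProduct.lift.tmul, LinearMap.mulRight_apply,
      AlgHom.toLinearMap_apply]
    rfl
  | add c₁ c₂ h₁ h₂ =>
    simp only [map_add, LinearMap.add_apply, TensorProduct.add_tmul, h₁, h₂]; rfl

variable (sd : SmashData k H A ρ S)

lemma e_one (h : H) (x : A ⊗[k] H) :
    sd.e x * sd.e ((1:A) ⊗ₜ[k] h) = sd.e (LinearMap.lTensor A (LinearMap.mulRight k h) x) := by
  induction x using TensorProduct.induction_on with
  | zero => simp
  | tmul a u =>
    rw [← sd.mulAH a u, mul_assoc, sd.mulHH, sd.mulAH, LinearMap.lTensor_tmul]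
    rfl
  | add x y hx hy => rw [map_add, add_mul, hx, hy, map_add, map_add]

lemma e_hAct (h : H) (x : A ⊗[k] H) :
    sd.e ((1:A) ⊗ₜ[k] h) * sd.e x
      = sd.e (act2 (WA ρ) (LVec.regular k H) (Coalgebra.comul h) x) := by
  induction x using TensorProduct.induction_on with
  | zero => simp; exact ((congrArg sd.e (map_zero _)).trans (map_zero _)).symm
  | tmul a u =>
    rw [← sd.mulAH a u, ← mul_assoc, sd.mulHA, e_one]; erw [nu_D0]; rw [← nu_apply]
  | add x y hx hy => rw [map_add, mul_add, hx, hy]; exact ((congrArg sd.e (map_add _ x y)).trans (map_add _ _ _)).symm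

/-- `h ↦ (1 # h) ⬝ s` transported to `A ⊗ H`. -/
noncomputable def inr (s : S) : H →ₗ[k] (A ⊗[k] H) where
  toFun h := sd.e.symm (sd.e ((1:A) ⊗ₜ[k] h) * s)
  map_add' h h' := by
    show sd.e.symm (sd.e ((1:A) ⊗ₜ[k] (h + h')) * s) = _
    rw [TensorProduct.tmul_add, map_add, add_mul, map_add]
  map_smul' c h := by
    show sd.e.symm (sd.e ((1:A) ⊗ₜ[k] (c • h)) * s) = _
    rw [TensorProduct.tmul_smul, map_smul, smul_mul_assoc, map_smul]
    rfl

lemma inr_add (s t : S) : inr sd (s + t) = inr sd s + inr sd t := by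
  ext h; simp [inr, mul_add]

lemma inr_smul (c : k) (s : S) : inr sd (c • s) = c • inr sd s := by
  ext h; simp [inr, mul_smul_comm]

lemma inr_equivariant (s : S) (x u : H) :
    inr sd s ((LVec.regular k H).ρ x u)
      = ((WA ρ).tmul (LVec.regular k H)).ρ x (inr sd s u) := by
  show sd.e.symm (sd.e ((1:A) ⊗ₜ[k] (x * u)) * s) = _
  rw [← sd.mulHH, mul_assoc]
  have : sd.e ((1:A) ⊗ₜ[k] u) * s = sd.e (sd.e.symm (sd.e ((1:A) ⊗ₜ[k] u) * s)) :=
    (sd.e.apply_symm_apply _).symm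
  rw [this, e_hAct]; erw [LinearEquiv.symm_apply_apply]
  exact (tmul_rho (WA ρ) (LVec.regular k H) x _).symm

/-- One further tensor step: `t ⊗ h ∈ A^{⊗(n+1)} ⊗ H`, `s ∈ S` yields
`t ⊗ ((1#h)s) ∈ A^{⊗(n+2)} ⊗ H`. -/
noncomputable def stepL (n : ℕ) (s : S) :
    (TensorProduct k ((WA ρ).tpow n).V H) →ₗ[k]
      (TensorProduct k ((WA ρ).tpow (n+1)).V H) :=
  (TensorProduct.assoc k ((WA ρ).tpow n).V A H).symm.toLinearMap ∘ₗ
    LinearMap.lTensor ((WA ρ).tpow n).V (inr sd s)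

lemma stepL_tmul (n : ℕ) (s : S) (u : ((WA ρ).tpow n).V) (h : H) :
    stepL sd n s (u ⊗ₜ[k] h)
      = (TensorProduct.assoc k ((WA ρ).tpow n).V A H).symm
          (u ⊗ₜ[k] (inr sd s h)) := rfl

lemma stepL_add (n : ℕ) (s t : S) (z : TensorProduct k ((WA ρ).tpow n).V H) :
    stepL sd n (s + t) z = stepL sd n s z + stepL sd n t z := by
  simp only [stepL, LinearMap.coe_comp, Function.comp_apply, inr_add,
    LinearMap.lTensor_add, LinearMap.add_apply, map_add]
  exact map_add (TensorProduct.assoc k ((WA ρ).tpow n).V A H).symm _ _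

lemma stepL_smul (n : ℕ) (c : k) (s : S) (z : TensorProduct k ((WA ρ).tpow n).V H) :
    stepL sd n (c • s) z = c • stepL sd n s z := by
  simp only [stepL, LinearMap.coe_comp, Function.comp_apply, inr_smul,
    LinearMap.lTensor_smul, LinearMap.smul_apply, map_smul]
  exact map_smul (TensorProduct.assoc k ((WA ρ).tpow n).V A H).symm _ _

lemma stepL_mulRight (n : ℕ) (s : S) (h : H) (z : TensorProduct k ((WA ρ).tpow n).V H) :
    stepL sd n (s * sd.e ((1:A) ⊗ₜ[k] h)) z
      = LinearMap.lTensor ((WA ρ).tpow (n+1)).V (LinearMap.mulRight k h)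
          (stepL sd n s z) := by
  induction z using TensorProduct.induction_on with
  | zero => simp only [map_zero]
  | tmul u h' =>
    rw [stepL_tmul, stepL_tmul]
    have e1 : inr sd (s * sd.e ((1:A) ⊗ₜ[k] h)) h'
        = LinearMap.lTensor A (LinearMap.mulRight k h) (inr sd s h') := by
      show sd.e.symm (sd.e ((1:A) ⊗ₜ[k] h') * (s * sd.e ((1:A) ⊗ₜ[k] h))) = _
      rw [← mul_assoc]
      have : sd.e ((1:A) ⊗ₜ[k] h') * s = sd.e (sd.e.symm (sd.e ((1:A) ⊗ₜ[k] h') * s)) :=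
        (sd.e.apply_symm_apply _).symm
      rw [this, e_one, LinearEquiv.symm_apply_apply]
      rfl
    rw [e1]
    generalize inr sd s h' = w
    induction w using TensorProduct.induction_on with
    | zero => simp only [map_zero, TensorProduct.tmul_zero]; exact (map_zero _).symm
    | tmul a v => simp only [LinearMap.lTensor_tmul, TensorProduct.assoc_symm_tmul]; rfl
    | add w₁ w₂ g₁ g₂ =>
      simp only [map_add, TensorProduct.tmul_add, g₁, g₂]; exact (map_add _ _ _).symm
  | add z₁ z₂ g₁ g₂ => simp only [map_add, g₁, g₂]

lemma stepL_absorb (n : ℕ) (s : S) (h : H) (z : TensorProduct k ((WA ρ).tpow n).V H) :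
    stepL sd n s (LinearMap.lTensor ((WA ρ).tpow n).V (LinearMap.mulRight k h) z)
      = stepL sd n (sd.e ((1:A) ⊗ₜ[k] h) * s) z := by
  induction z using TensorProduct.induction_on with
  | zero => simp only [map_zero]
  | tmul u h' =>
    rw [LinearMap.lTensor_tmul, stepL_tmul, stepL_tmul]
    congr 1
    have : inr sd s (LinearMap.mulRight k h h')
        = inr sd (sd.e ((1:A) ⊗ₜ[k] h) * s) h' := by
      show sd.e.symm (sd.e ((1:A) ⊗ₜ[k] (h' * h)) * s) = _
      rw [← sd.mulHH, mul_assoc]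
      rfl
    rw [this]
  | add z₁ z₂ g₁ g₂ => simp only [map_add, g₁, g₂]

/-- The key intertwining: `stepL` commutes with the diagonal actions. -/
lemma stepL_act (n : ℕ) (s : S) (h : H) (t : TensorProduct k ((WA ρ).tpow n).V H) :
    stepL sd n s ((((WA ρ).tpow n).tmul (LVec.regular k H)).ρ h t)
      = (((((WA ρ).tpow n).tmul (WA ρ)).tmul (LVec.regular k H)).ρ h (stepL sd n s t)) := by
  have h1 := lTensor_equivariant ((WA ρ).tpow n) (LVec.regular k H)
    ((WA ρ).tmul (LVec.regular k H)) (show H →ₗ[k] A ⊗[k] H from inr sd s)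
    (fun x y => inr_equivariant sd s x y) h t
  have h2 := assoc_rho ((WA ρ).tpow n) (WA ρ) (LVec.regular k H) h (stepL sd n s t)
  have e3 : TensorProduct.assoc k ((WA ρ).tpow n).V A H (stepL sd n s t)
      = LinearMap.lTensor ((WA ρ).tpow n).V (inr sd s) t := by
    show TensorProduct.assoc k ((WA ρ).tpow n).V A H
      ((TensorProduct.assoc k ((WA ρ).tpow n).V A H).symm _) = _
    rw [LinearEquiv.apply_symm_apply]
  apply (TensorProduct.assoc k ((WA ρ).tpow n).V A H).injective
  have e4 : TensorProduct.assoc k ((WA ρ).tpow n).V A H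
      (stepL sd n s ((((WA ρ).tpow n).tmul (LVec.regular k H)).ρ h t))
      = LinearMap.lTensor ((WA ρ).tpow n).V (inr sd s)
          ((((WA ρ).tpow n).tmul (LVec.regular k H)).ρ h t) := by
    show TensorProduct.assoc k ((WA ρ).tpow n).V A H
      ((TensorProduct.assoc k ((WA ρ).tpow n).V A H).symm _) = _
    rw [LinearEquiv.apply_symm_apply]
  rw [e4]
  exact h1.symm.trans
    ((congrArg (fun w => (((WA ρ).tpow n).tmul ((WA ρ).tmul (LVec.regular k H))).ρ h w)
      e3.symm).trans h2.symm)

/-- The forward map on tuples: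
`(s₀, …, sₙ) ↦` the image of `s₀ ⊗ ⋯ ⊗ sₙ` in `A^{⊗(n+1)} ⊗ H`. -/
noncomputable def Gf : (n : ℕ) → (Fin (n+1) → S) → TensorProduct k ((WA ρ).tpow n).V H
  | 0, v => sd.e.symm (v 0)
  | n+1, v => stepL sd n (v (Fin.last (n+1))) (Gf n (Fin.init v))

lemma Gf_zero (v : Fin 1 → S) : Gf sd 0 v = sd.e.symm (v 0) := rfl

lemma Gf_succ (n : ℕ) (v : Fin (n+2) → S) :
    Gf sd (n+1) v = stepL sd n (v (Fin.last (n+1))) (Gf sd n (Fin.init v)) := rfl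

lemma upd1 {β : Type u} (v : Fin 1 → β) (i j : Fin 1) (z : β) :
    (update v i z) j = z := by
  have : j = i := Subsingleton.elim _ _
  rw [this, Function.update_self]

lemma init_update_castSucc {β : Type u} {n : ℕ} (v : Fin (n+2) → β) (j : Fin (n+1)) (x : β) :
    Fin.init (update v j.castSucc x) = update (Fin.init v) j x := by
  funext i
  simp only [Fin.init, Function.update_apply, Fin.castSucc_inj]

lemma update_castSucc_last {β : Type u} {n : ℕ} (v : Fin (n+2) → β) (j : Fin (n+1)) (x : β) :
    (update v j.castSucc x) (Fin.last (n+1)) = v (Fin.last (n+1)) :=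
  Function.update_of_ne (Fin.castSucc_lt_last j).ne' _ v

lemma init_update_last {β : Type u} {n : ℕ} (v : Fin (n+2) → β) (x : β) :
    Fin.init (update v (Fin.last (n+1)) x) = Fin.init v := by
  funext i
  simp only [Fin.init]
  exact Function.update_of_ne (Fin.castSucc_lt_last i).ne _ v

lemma Gf_add (n : ℕ) (v : Fin (n+1) → S) (i : Fin (n+1)) (x y : S) :
    Gf sd n (update v i (x + y)) = Gf sd n (update v i x) + Gf sd n (update v i y) := by
  induction n with
  | zero =>
    rw [Gf_zero, Gf_zero, Gf_zero, upd1 v i 0, upd1 v i 0, upd1 v i 0, map_add]; rfl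
  | succ n ih =>
    rcases Fin.eq_castSucc_or_eq_last i with ⟨j, rfl⟩ | rfl
    · rw [Gf_succ, Gf_succ, Gf_succ, update_castSucc_last, update_castSucc_last,
        update_castSucc_last, init_update_castSucc, init_update_castSucc,
        init_update_castSucc, ih, map_add]
    · rw [Gf_succ, Gf_succ, Gf_succ, init_update_last, init_update_last, init_update_last,
        Function.update_self, Function.update_self, Function.update_self, stepL_add]

lemma Gf_smul (n : ℕ) (v : Fin (n+1) → S) (i : Fin (n+1)) (c : k) (x : S) :
    Gf sd n (update v i (c • x)) = c • Gf sd n (update v i x) := by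
  induction n with
  | zero =>
    rw [Gf_zero, Gf_zero, upd1 v i 0, upd1 v i 0, map_smul]; rfl
  | succ n ih =>
    rcases Fin.eq_castSucc_or_eq_last i with ⟨j, rfl⟩ | rfl
    · rw [Gf_succ, Gf_succ, update_castSucc_last, update_castSucc_last,
        init_update_castSucc, init_update_castSucc, ih, map_smul]
    · rw [Gf_succ, Gf_succ, init_update_last, init_update_last,
        Function.update_self, Function.update_self, stepL_smul]

lemma Gf_rmul (n : ℕ) (v : Fin (n+1) → S) (h : H) :
    Gf sd n (update v (Fin.last n) (v (Fin.last n) * sd.e ((1:A) ⊗ₜ[k] h)))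
      = LinearMap.lTensor ((WA ρ).tpow n).V (LinearMap.mulRight k h) (Gf sd n v) := by
  induction n with
  | zero =>
    rw [Gf_zero, Gf_zero, upd1 v (Fin.last 0) 0]
    have : v (Fin.last 0) = sd.e (sd.e.symm (v (Fin.last 0))) := (sd.e.apply_symm_apply _).symm
    rw [this, e_one, LinearEquiv.symm_apply_apply]
    have h0 : v (Fin.last 0) = v 0 := rfl
    rfl
  | succ n ih =>
    rw [Gf_succ, Gf_succ, init_update_last, Function.update_self, stepL_mulRight]

lemma Gf_balance (n : ℕ) (v : Fin (n+1) → S) (i : Fin n) (h : H) :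
    Gf sd n (update v i.castSucc (v i.castSucc * sd.e ((1:A) ⊗ₜ[k] h)))
      = Gf sd n (update v i.succ (sd.e ((1:A) ⊗ₜ[k] h) * v i.succ)) := by
  induction n with
  | zero => exact i.elim0
  | succ n ih =>
    rcases Fin.eq_castSucc_or_eq_last i with ⟨j, rfl⟩ | rfl
    · rw [Gf_succ, Gf_succ, Fin.succ_castSucc, update_castSucc_last, update_castSucc_last,
        init_update_castSucc, init_update_castSucc]
      exact congrArg (stepL sd n (v (Fin.last (n+1)))) (ih (Fin.init v) j)
    · rw [Gf_succ, Gf_succ, Fin.succ_last, update_castSucc_last, init_update_last,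
        Function.update_self, init_update_castSucc]
      have hr := Gf_rmul sd n (Fin.init v) h
      have : (Fin.init v) (Fin.last n) = v (Fin.last n).castSucc := rfl
      rw [this] at hr
      rw [hr, stepL_absorb]

/-- The forward map on the free module. -/
noncomputable def Fmap (n : ℕ) : TF k S n →ₗ[k] TensorProduct k ((WA ρ).tpow n).V H :=
  Finsupp.lift _ k _ (Gf sd n)

lemma Fmap_single (n : ℕ) (v : Fin (n+1) → S) (c : k) :
    Fmap sd n (Finsupp.single v c) = c • Gf sd n v := by
  simp [Fmap]

variable (Bsub : Subalgebra k S)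

lemma rel_le_ker (hB : (Bsub : Set S) = Set.range (fun h : H => sd.e ((1 : A) ⊗ₜ[k] h)))
    (n : ℕ) : SubalgDepth.Rel Bsub n ≤ LinearMap.ker (Fmap sd n) := by
  rw [SubalgDepth.Rel, Submodule.span_le]
  rintro z (⟨v, i, x, y, rfl⟩ | ⟨v, i, c, x, rfl⟩ | ⟨v, i, b, rfl⟩) <;>
    simp only [SetLike.mem_coe, LinearMap.mem_ker, map_sub, map_smul, Fmap_single, one_smul]
  · rw [Gf_add]; abel
  · rw [Gf_smul]; simp
  · obtain ⟨h, hh⟩ : ∃ h : H, sd.e ((1:A) ⊗ₜ[k] h) = (b : S) := by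
      have hb := b.2
      rw [← SetLike.mem_coe, hB] at hb
      exact hb
    rw [← hh, Gf_balance, sub_self]

/-- The forward map, descended to the relative tensor power. -/
noncomputable def Fbar (hB : (Bsub : Set S) = Set.range (fun h : H => sd.e ((1 : A) ⊗ₜ[k] h)))
    (n : ℕ) : TP Bsub n →ₗ[k] TensorProduct k ((WA ρ).tpow n).V H :=
  Submodule.liftQ _ (Fmap sd n) (rel_le_ker sd Bsub hB n)

lemma Fbar_mk (hB : (Bsub : Set S) = Set.range (fun h : H => sd.e ((1 : A) ⊗ₜ[k] h)))
    (n : ℕ) (v : Fin (n+1) → S) :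
    Fbar sd Bsub hB n (SubalgDepth.mk Bsub n v) = Gf sd n v := by
  have e : Fbar sd Bsub hB n (SubalgDepth.mk Bsub n v) = Fmap sd n (Finsupp.single v 1) := rfl
  rw [e, Fmap_single, one_smul]

lemma tp_hom_ext {Bsub : Subalgebra k S} {n : ℕ} {M : Type u} [AddCommGroup M] [Module k M]
    {f g : TP Bsub n →ₗ[k] M}
    (hfg : ∀ v, f (SubalgDepth.mk Bsub n v) = g (SubalgDepth.mk Bsub n v)) : f = g := by
  apply LinearMap.ext; intro x
  obtain ⟨y, rfl⟩ := Submodule.Quotient.mk_surjective (SubalgDepth.Rel Bsub n) x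
  induction y using Finsupp.induction_linear with
  | zero =>
    exact (map_zero f).trans (map_zero g).symm
  | add a b ha hb =>
    exact (map_add f _ _).trans ((congrArg₂ (· + ·) ha hb).trans (map_add g _ _).symm)
  | single v c =>
    have h1 : (Finsupp.single v c : TF k S n) = c • Finsupp.single v 1 := by
      rw [Finsupp.smul_single, smul_eq_mul, mul_one]
    have h2 : (Submodule.Quotient.mk (Finsupp.single v c) : TP Bsub n)
        = c • SubalgDepth.mk Bsub n v := by
      rw [h1]; exact (Submodule.Quotient.mk_smul _ _ _)
    rw [h2, map_smul, map_smul, hfg v]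

variable (Bsub : Subalgebra k S)

lemma mk_add (n : ℕ) (v : Fin (n+1) → S) (i : Fin (n+1)) (x y : S) :
    SubalgDepth.mk Bsub n (update v i (x + y))
      = SubalgDepth.mk Bsub n (update v i x) + SubalgDepth.mk Bsub n (update v i y) := by
  show (Submodule.Quotient.mk (Finsupp.single (update v i (x+y)) 1) : TP Bsub n)
      = Submodule.Quotient.mk (Finsupp.single (update v i x) 1)
        + Submodule.Quotient.mk (Finsupp.single (update v i y) 1)
  erw [show (Submodule.Quotient.mk (Finsupp.single (update v i x) 1) : TP Bsub n)
        + Submodule.Quotient.mk (Finsupp.single (update v i y) 1)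
      = Submodule.Quotient.mk (Finsupp.single (update v i x) 1
          + Finsupp.single (update v i y) 1) from rfl]
  refine (Submodule.Quotient.eq _).mpr ?_
  rw [sub_add_eq_sub_sub]
  exact Submodule.subset_span (Or.inl ⟨v, i, x, y, rfl⟩)

lemma mk_smul (n : ℕ) (v : Fin (n+1) → S) (i : Fin (n+1)) (c : k) (x : S) :
    SubalgDepth.mk Bsub n (update v i (c • x)) = c • SubalgDepth.mk Bsub n (update v i x) := by
  show (Submodule.Quotient.mk (Finsupp.single (update v i (c • x)) 1) : TP Bsub n)
      = c • Submodule.Quotient.mk (Finsupp.single (update v i x) 1)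
  erw [show (c • Submodule.Quotient.mk (Finsupp.single (update v i x) 1) : TP Bsub n)
      = Submodule.Quotient.mk (c • Finsupp.single (update v i x) 1) from rfl]
  refine (Submodule.Quotient.eq _).mpr ?_
  exact Submodule.subset_span (Or.inr (Or.inl ⟨v, i, c, x, rfl⟩))

lemma e_mem (hB : (Bsub : Set S) = Set.range (fun h : H => sd.e ((1 : A) ⊗ₜ[k] h)))
    (h : H) : sd.e ((1:A) ⊗ₜ[k] h) ∈ Bsub := by
  rw [← SetLike.mem_coe, hB]; exact ⟨h, rfl⟩

lemma mk_balance (hB : (Bsub : Set S) = Set.range (fun h : H => sd.e ((1 : A) ⊗ₜ[k] h)))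
    (n : ℕ) (v : Fin (n+1) → S) (i : Fin n) (h : H) :
    SubalgDepth.mk Bsub n (update v i.castSucc (v i.castSucc * sd.e ((1:A) ⊗ₜ[k] h)))
      = SubalgDepth.mk Bsub n (update v i.succ (sd.e ((1:A) ⊗ₜ[k] h) * v i.succ)) := by
  refine (Submodule.Quotient.eq _).mpr ?_
  exact Submodule.subset_span (Or.inr (Or.inr ⟨v, i, ⟨_, e_mem sd Bsub hB h⟩, rfl⟩))

/-- Insertion into slot `i`, as a linear map. -/
noncomputable def ins (n : ℕ) (v : Fin (n+1) → S) (i : Fin (n+1)) : S →ₗ[k] TP Bsub n where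
  toFun s := SubalgDepth.mk Bsub n (update v i s)
  map_add' x y := mk_add Bsub n v i x y
  map_smul' c x := mk_smul Bsub n v i c x

lemma Rmul_mk (n : ℕ) (a : S) (v : Fin (n+1) → S) :
    SubalgDepth.Rmul Bsub n a (SubalgDepth.mk Bsub n v)
      = SubalgDepth.mk Bsub n (update v (Fin.last n) (v (Fin.last n) * a)) := by
  have e : SubalgDepth.Rmul Bsub n a (SubalgDepth.mk Bsub n v)
      = Submodule.Quotient.mk (rF (k := k) n a (Finsupp.single v 1)) := rfl
  rw [e, rF_single]
  rfl

lemma Lmul_mk (n : ℕ) (a : S) (v : Fin (n+1) → S) :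
    SubalgDepth.Lmul Bsub n a (SubalgDepth.mk Bsub n v)
      = SubalgDepth.mk Bsub n (update v 0 (a * v 0)) := by
  have e : SubalgDepth.Lmul Bsub n a (SubalgDepth.mk Bsub n v)
      = Submodule.Quotient.mk (lF (k := k) n a (Finsupp.single v 1)) := rfl
  rw [e, lF_single]
  rfl

lemma Rmul_add (n : ℕ) (a b : S) :
    SubalgDepth.Rmul Bsub n (a + b)
      = SubalgDepth.Rmul Bsub n a + SubalgDepth.Rmul Bsub n b := by
  refine tp_hom_ext fun v => ?_
  rw [LinearMap.add_apply, Rmul_mk, Rmul_mk, Rmul_mk, mul_add, mk_add]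

lemma Rmul_smul (n : ℕ) (c : k) (a : S) :
    SubalgDepth.Rmul Bsub n (c • a) = c • SubalgDepth.Rmul Bsub n a := by
  refine tp_hom_ext fun v => ?_
  rw [LinearMap.smul_apply, Rmul_mk, Rmul_mk, mul_smul_comm, mk_smul]

/-- Right multiplication by `1 # h`, linearly in `h`. -/
noncomputable def Rop (n : ℕ) : H →ₗ[k] (TP Bsub n →ₗ[k] TP Bsub n) where
  toFun h := SubalgDepth.Rmul Bsub n (sd.e ((1:A) ⊗ₜ[k] h))
  map_add' h h' := by
    show SubalgDepth.Rmul Bsub n (sd.e ((1:A) ⊗ₜ[k] (h + h'))) = _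
    rw [TensorProduct.tmul_add, map_add, Rmul_add]
  map_smul' c h := by
    show SubalgDepth.Rmul Bsub n (sd.e ((1:A) ⊗ₜ[k] (c • h))) = _
    rw [TensorProduct.tmul_smul, map_smul, Rmul_smul]
    rfl

/-- Append a slot, on the free module. -/
noncomputable def App0 (n : ℕ) : TF k S n →ₗ[k] (S →ₗ[k] TP Bsub (n+1)) :=
  Finsupp.lift _ k _ (fun v => ins Bsub (n+1) (Fin.snoc v 1) (Fin.last (n+1)))

lemma App0_single (n : ℕ) (v : Fin (n+1) → S) (c : k) (s : S) :
    App0 Bsub n (Finsupp.single v c) s = c • SubalgDepth.mk Bsub (n+1) (Fin.snoc v s) := by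
  have h1 : App0 Bsub n (Finsupp.single v c)
      = c • ins Bsub (n+1) (Fin.snoc v 1) (Fin.last (n+1)) := by
    simp [App0]
  rw [h1, LinearMap.smul_apply]
  congr 1
  show SubalgDepth.mk Bsub (n+1) (update (Fin.snoc v 1) (Fin.last (n+1)) s) = _
  rw [Fin.update_snoc_last]

lemma rel_le_ker_App (hB : (Bsub : Set S) = Set.range (fun h : H => sd.e ((1 : A) ⊗ₜ[k] h)))
    (n : ℕ) :
    SubalgDepth.Rel Bsub n ≤ LinearMap.ker (App0 Bsub n) := by
  rw [SubalgDepth.Rel, Submodule.span_le]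
  rintro z (⟨v, i, x, y, rfl⟩ | ⟨v, i, c, x, rfl⟩ | ⟨v, i, b, rfl⟩) <;>
    refine LinearMap.mem_ker.mpr (LinearMap.ext fun s => ?_) <;>
    simp only [map_sub, map_smul, LinearMap.sub_apply, LinearMap.smul_apply,
      LinearMap.zero_apply, App0_single, one_smul]
  · rw [Fin.snoc_update, Fin.snoc_update, Fin.snoc_update, mk_add]; abel
  · rw [Fin.snoc_update, Fin.snoc_update, mk_smul]; simp
  · obtain ⟨h, hh⟩ : ∃ h : H, sd.e ((1:A) ⊗ₜ[k] h) = (b : S) := by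
      have hb := b.2
      rw [← SetLike.mem_coe, hB] at hb
      exact hb
    rw [Fin.snoc_update, Fin.snoc_update, ← hh]
    have h1 : (Fin.snoc v s : Fin (n+2) → S) i.castSucc.castSucc = v i.castSucc := by
      rw [Fin.snoc_castSucc]
    have h2 : (Fin.snoc v s : Fin (n+2) → S) i.succ.castSucc = v i.succ := by
      rw [Fin.snoc_castSucc]
    rw [← h1, ← h2, ← Fin.succ_castSucc, mk_balance sd Bsub hB (n+1) (Fin.snoc v s) i.castSucc h,
      Fin.succ_castSucc, sub_self]

variable (hB : (Bsub : Set S) = Set.range (fun h : H => sd.e ((1 : A) ⊗ₜ[k] h)))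

/-- Append a slot, on the relative tensor power. -/
noncomputable def App (n : ℕ) : TP Bsub n →ₗ[k] (S →ₗ[k] TP Bsub (n+1)) :=
  Submodule.liftQ _ (App0 Bsub n) (rel_le_ker_App sd Bsub hB n)

lemma App_mk (n : ℕ) (v : Fin (n+1) → S) (s : S) :
    App sd Bsub hB n (SubalgDepth.mk Bsub n v) s = SubalgDepth.mk Bsub (n+1) (Fin.snoc v s) := by
  have e : App sd Bsub hB n (SubalgDepth.mk Bsub n v) s
      = App0 Bsub n (Finsupp.single v 1) s := rfl
  rw [e, App0_single, one_smul]

lemma App_rmul (n : ℕ) (x : TP Bsub n) (s c : S) :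
    SubalgDepth.Rmul Bsub (n+1) c (App sd Bsub hB n x s)
      = App sd Bsub hB n x (s * c) := by
  have key : (SubalgDepth.Rmul Bsub (n+1) c) ∘ₗ ((App sd Bsub hB n).flip s)
      = (App sd Bsub hB n).flip (s * c) := by
    refine tp_hom_ext fun v => ?_
    show SubalgDepth.Rmul Bsub (n+1) c (App sd Bsub hB n (SubalgDepth.mk Bsub n v) s)
        = App sd Bsub hB n (SubalgDepth.mk Bsub n v) (s * c)
    rw [App_mk, App_mk, Rmul_mk]
    congr 1
    rw [Fin.snoc_last, Fin.update_snoc_last]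
  exact LinearMap.congr_fun key x

lemma App_balance (n : ℕ) (h : H) (x : TP Bsub n) (s : S) :
    App sd Bsub hB n (SubalgDepth.Rmul Bsub n (sd.e ((1:A) ⊗ₜ[k] h)) x) s
      = App sd Bsub hB n x (sd.e ((1:A) ⊗ₜ[k] h) * s) := by
  have key : ((App sd Bsub hB n).flip s) ∘ₗ (SubalgDepth.Rmul Bsub n (sd.e ((1:A) ⊗ₜ[k] h)))
      = (App sd Bsub hB n).flip (sd.e ((1:A) ⊗ₜ[k] h) * s) := by
    refine tp_hom_ext fun v => ?_
    show App sd Bsub hB n (SubalgDepth.Rmul Bsub n (sd.e ((1:A) ⊗ₜ[k] h))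
        (SubalgDepth.mk Bsub n v)) s = App sd Bsub hB n (SubalgDepth.mk Bsub n v) _
    rw [Rmul_mk, App_mk, App_mk]
    have h1 : (Fin.snoc (update v (Fin.last n) (v (Fin.last n) * sd.e ((1:A) ⊗ₜ[k] h))) s
        : Fin (n+2) → S) = Function.update (Fin.snoc v s) (Fin.last n).castSucc
          ((Fin.snoc v s : Fin (n+2) → S) (Fin.last n).castSucc * sd.e ((1:A) ⊗ₜ[k] h)) := by
      rw [Fin.snoc_update, Fin.snoc_castSucc]
    rw [h1, mk_balance sd Bsub hB (n+1) (Fin.snoc v s) (Fin.last n) h, Fin.succ_last,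
      Fin.snoc_last, Fin.update_snoc_last]
  exact LinearMap.congr_fun key x

/-- `a ↦ a ⊗ 1 ∈ S`. -/
noncomputable def jA : A →ₗ[k] S :=
  sd.e.toLinearMap ∘ₗ ((TensorProduct.mk k A H).flip 1)

lemma jA_apply (a : A) : jA sd a = sd.e (a ⊗ₜ[k] (1:H)) := rfl

/-- `a₀ ⊗ ⋯ ⊗ aₙ ↦ (a₀#1) ⊗ ⋯ ⊗ (aₙ#1)`. -/
noncomputable def tau : (n : ℕ) → (((WA ρ).tpow n).V →ₗ[k] TP Bsub n)
  | 0 => ((ins Bsub 0 (fun _ => 1) 0) ∘ₗ (jA sd) : A →ₗ[k] TP Bsub 0)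
  | n+1 => TensorProduct.lift (((App sd Bsub hB n) ∘ₗ (tau n)).compl₂ (jA sd))

lemma tau_zero (a : A) :
    tau sd Bsub hB 0 a = SubalgDepth.mk Bsub 0 (fun _ => sd.e (a ⊗ₜ[k] (1:H))) := by
  show SubalgDepth.mk Bsub 0 (update (fun _ => 1) 0 (sd.e (a ⊗ₜ[k] (1:H)))) = _
  congr 1
  funext i
  have : i = 0 := Subsingleton.elim (α := Fin 1) i 0
  rw [this, Function.update_self]

lemma tau_succ (n : ℕ) (u : ((WA ρ).tpow n).V) (a : A) :
    tau sd Bsub hB (n+1) (u ⊗ₜ[k] a)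
      = App sd Bsub hB n (tau sd Bsub hB n u) (sd.e (a ⊗ₜ[k] (1:H))) := rfl

/-- The inverse map `A^{⊗(n+1)} ⊗ H → A^{⊗_B (n+1)}`. -/
noncomputable def psi (n : ℕ) :
    (TensorProduct k ((WA ρ).tpow n).V H) →ₗ[k] TP Bsub n :=
  TensorProduct.lift ((Rop sd Bsub n).flip ∘ₗ (tau sd Bsub hB n))

lemma psi_tmul (n : ℕ) (u : ((WA ρ).tpow n).V) (h : H) :
    psi sd Bsub hB n (u ⊗ₜ[k] h)
      = SubalgDepth.Rmul Bsub n (sd.e ((1:A) ⊗ₜ[k] h)) (tau sd Bsub hB n u) := rfl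

lemma psi_zero_apply (a : A) (h : H) :
    psi sd Bsub hB 0 (a ⊗ₜ[k] h)
      = SubalgDepth.mk Bsub 0 (update (fun _ => 1) 0 (sd.e (a ⊗ₜ[k] h))) := by
  erw [psi_tmul, tau_zero, Rmul_mk]
  congr 1
  funext i
  rw [upd1, upd1]
  rw [sd.mulAH]

lemma Gf_snoc (n : ℕ) (v : Fin (n+1) → S) (s : S) :
    Gf sd (n+1) (Fin.snoc v s) = stepL sd n s (Gf sd n v) := by
  rw [Gf_succ, Fin.snoc_last, Fin.init_snoc]

lemma psi_step (n : ℕ) (s : S) (t : TensorProduct k ((WA ρ).tpow n).V H) :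
    psi sd Bsub hB (n+1) (stepL sd n s t)
      = App sd Bsub hB n (psi sd Bsub hB n t) s := by
  induction t using TensorProduct.induction_on with
  | zero => simp only [map_zero, LinearMap.zero_apply]
  | tmul u h =>
    have inner : ∀ x : A ⊗[k] H,
        psi sd Bsub hB (n+1) ((TensorProduct.assoc k ((WA ρ).tpow n).V A H).symm (u ⊗ₜ[k] x))
          = App sd Bsub hB n (tau sd Bsub hB n u) (sd.e x) := by
      intro x
      induction x using TensorProduct.induction_on with
      | zero => simp only [TensorProduct.tmul_zero, map_zero, LinearMap.map_zero]; exact map_zero _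
      | tmul a h' =>
        rw [TensorProduct.assoc_symm_tmul]
        erw [psi_tmul, tau_succ, App_rmul]
        rw [sd.mulAH]
      | add x y hx hy =>
        rw [TensorProduct.tmul_add, map_add]; erw [map_add (psi sd Bsub hB (n+1))]; rw [hx, hy, map_add, map_add]
    rw [stepL_tmul, inner (inr sd s h)]
    have h2 : sd.e (inr sd s h) = sd.e ((1:A) ⊗ₜ[k] h) * s := sd.e.apply_symm_apply _
    rw [h2, psi_tmul, App_balance]
  | add t₁ t₂ h₁ h₂ =>
    simp only [map_add, LinearMap.add_apply, h₁, h₂]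

lemma left_inv (n : ℕ) (v : Fin (n+1) → S) :
    psi sd Bsub hB n (Gf sd n v) = SubalgDepth.mk Bsub n v := by
  induction n with
  | zero =>
    rw [Gf_zero]
    have key : ∀ x : A ⊗[k] H, psi sd Bsub hB 0 x
        = SubalgDepth.mk Bsub 0 (update (fun _ => 1) 0 (sd.e x)) := by
      intro x
      induction x using TensorProduct.induction_on with
      | zero =>
        rw [map_zero]; erw [map_zero (psi sd Bsub hB 0)]
        have : (0 : S) = (0:k) • (0:S) := by rw [zero_smul]
        rw [this, mk_smul, zero_smul]
      | tmul a h => exact psi_zero_apply sd Bsub hB a h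
      | add x y hx hy =>
        erw [map_add (psi sd Bsub hB 0)]; rw [hx, hy, map_add, mk_add]
    rw [key, sd.e.apply_symm_apply]
    congr 1
    funext i
    rw [upd1]
    exact congrArg v (Subsingleton.elim (α := Fin 1) 0 i)
  | succ n ih =>
    have hv : v = Fin.snoc (Fin.init v) (v (Fin.last (n+1))) := (Fin.snoc_init_self v).symm
    rw [hv, Gf_snoc, psi_step, ih, App_mk]

lemma Fbar_App (n : ℕ) (x : TP Bsub n) (s : S) :
    Fbar sd Bsub hB (n+1) (App sd Bsub hB n x s)
      = stepL sd n s (Fbar sd Bsub hB n x) := by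
  have key : (Fbar sd Bsub hB (n+1)) ∘ₗ ((App sd Bsub hB n).flip s)
      = (stepL sd n s) ∘ₗ (Fbar sd Bsub hB n) := by
    refine tp_hom_ext fun v => ?_
    show Fbar sd Bsub hB (n+1) (App sd Bsub hB n (SubalgDepth.mk Bsub n v) s)
        = stepL sd n s (Fbar sd Bsub hB n (SubalgDepth.mk Bsub n v))
    rw [App_mk, Fbar_mk, Fbar_mk, Gf_snoc]
  exact LinearMap.congr_fun key x

lemma right_inv (n : ℕ) (x : TensorProduct k ((WA ρ).tpow n).V H) :
    Fbar sd Bsub hB n (psi sd Bsub hB n x) = x := by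
  induction n with
  | zero =>
    induction x using TensorProduct.induction_on with
    | zero => rw [map_zero, map_zero]
    | tmul a h =>
      erw [psi_zero_apply]; rw [Fbar_mk, Gf_zero, Function.update_self, sd.e.symm_apply_apply]; rfl
    | add x y hx hy => rw [map_add, map_add, hx, hy]
  | succ n ih =>
    induction x using TensorProduct.induction_on with
    | zero => rw [map_zero, map_zero]
    | tmul w h =>
      induction w using TensorProduct.induction_on with
      | zero => erw [TensorProduct.zero_tmul, map_zero (psi sd Bsub hB (n+1)), map_zero (Fbar sd Bsub hB (n+1))]
      | tmul t a =>
        have claim : (t ⊗ₜ[k] a) ⊗ₜ[k] h = stepL sd n (sd.e (a ⊗ₜ[k] h)) (t ⊗ₜ[k] (1:H)) := by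
          rw [stepL_tmul]
          have : inr sd (sd.e (a ⊗ₜ[k] h)) (1:H) = a ⊗ₜ[k] h := by
            show sd.e.symm (sd.e ((1:A) ⊗ₜ[k] (1:H)) * sd.e (a ⊗ₜ[k] h)) = _
            rw [sd.unit, one_mul, sd.e.symm_apply_apply]
          rw [this, TensorProduct.assoc_symm_tmul]
        erw [claim]; rw [psi_step, Fbar_App, ih (t ⊗ₜ[k] (1:H)), ← claim]
      | add w₁ w₂ g₁ g₂ =>
        erw [TensorProduct.add_tmul, map_add (psi sd Bsub hB (n+1)), map_add (Fbar sd Bsub hB (n+1)), g₁, g₂]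
    | add x y hx hy => rw [map_add, map_add, hx, hy]

/-- Left-action intertwining of the forward map. -/
lemma Gf_lmul (n : ℕ) (v : Fin (n+1) → S) (h : H) :
    Gf sd n (update v 0 (sd.e ((1:A) ⊗ₜ[k] h) * v 0))
      = (((WA ρ).tpow n).tmul (LVec.regular k H)).ρ h (Gf sd n v) := by
  induction n with
  | zero =>
    rw [Gf_zero, upd1 v 0 0, Gf_zero]
    have e2 : sd.e.symm (sd.e ((1:A) ⊗ₜ[k] h) * v 0)
        = act2 (WA ρ) (LVec.regular k H) (Coalgebra.comul h) (sd.e.symm (v 0)) := by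
      conv_lhs => rw [show v 0 = sd.e (sd.e.symm (v 0)) from (sd.e.apply_symm_apply _).symm]
      rw [e_hAct]; erw [sd.e.symm_apply_apply]
    rw [e2]
    exact (tmul_rho (WA ρ) (LVec.regular k H) h (sd.e.symm (v 0))).symm
  | succ n ih =>
    have h0 : (0 : Fin (n+2)) = (0 : Fin (n+1)).castSucc := by
      rw [Fin.castSucc_zero]
    rw [Gf_succ, Gf_succ, h0, update_castSucc_last, init_update_castSucc]
    have hi : (Fin.init v) 0 = v ((0 : Fin (n+1)).castSucc) := rfl
    have := ih (Fin.init v)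
    rw [hi] at this
    rw [this, stepL_act]
    rfl

/-- The explicit pattern formula. -/
lemma Gf_pattern (n : ℕ) : ∀ (a : Fin (n+1) → A) (h : H),
    Gf sd n (fun i => if i = Fin.last n then sd.e (a i ⊗ₜ[k] h) else sd.e (a i ⊗ₜ[k] 1))
      = ((WA ρ).tprod n a) ⊗ₜ[k] h := by
  induction n with
  | zero =>
    intro a h
    rw [Gf_zero]
    have h0 : (0 : Fin 1) = Fin.last 0 := Subsingleton.elim _ _
    rw [if_pos h0, sd.e.symm_apply_apply]
    rfl
  | succ n ih =>
    intro a h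
    rw [Gf_succ]
    simp only [↓reduceIte]
    have hinit : Fin.init (fun i => if i = Fin.last (n+1) then sd.e (a i ⊗ₜ[k] h)
        else sd.e (a i ⊗ₜ[k] 1))
        = fun i => if i = Fin.last n then sd.e (a i.castSucc ⊗ₜ[k] (1:H))
            else sd.e (a i.castSucc ⊗ₜ[k] (1:H)) := by
      funext i
      simp only [Fin.init]
      rw [if_neg (Fin.castSucc_lt_last i).ne, ite_self]
    rw [hinit, ih (fun j => a j.castSucc) 1, stepL_tmul]
    have : inr sd (sd.e (a (Fin.last (n+1)) ⊗ₜ[k] h)) (1:H)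
        = a (Fin.last (n+1)) ⊗ₜ[k] h := by
      show sd.e.symm (sd.e ((1:A) ⊗ₜ[k] (1:H)) * sd.e (a (Fin.last (n+1)) ⊗ₜ[k] h)) = _
      rw [sd.unit, one_mul, sd.e.symm_apply_apply]
    rw [this, TensorProduct.assoc_symm_tmul]
    rfl

open HopfModDepth Smash TensorProduct in
theorem tensor_powers_smash_aux
    {k H A S : Type u} [Field k] [Ring H] [Bialgebra k H]
    [Ring A] [Algebra k A] [Ring S] [Algebra k S]
    {ρ : H →ₐ[k] Module.End k A} (sd : SmashData k H A ρ S)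
    (n : ℕ) (Bsub : Subalgebra k S)
    (hB : (Bsub : Set S) = Set.range (fun h : H => sd.e ((1 : A) ⊗ₜ[k] h))) :
    ∃ φ : SubalgDepth.TP Bsub n ≃ₗ[k]
        ((({ V := A, ρ := ρ } : LVec k H).tpow n).tmul (LVec.regular k H)).V,
      (∀ (h : H) (x : SubalgDepth.TP Bsub n),
        φ (SubalgDepth.Lmul Bsub n (sd.e ((1:A) ⊗ₜ[k] h)) x)
          = ((({ V := A, ρ := ρ } : LVec k H).tpow n).tmul (LVec.regular k H)).ρ h (φ x)) ∧
      (∀ (h : H) (x : SubalgDepth.TP Bsub n),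
        φ (SubalgDepth.Rmul Bsub n (sd.e ((1:A) ⊗ₜ[k] h)) x)
          = (LinearMap.lTensor ((({ V := A, ρ := ρ } : LVec k H).tpow n).V)
              (LinearMap.mulRight k h)) (φ x)) ∧
      (∀ (a : Fin (n+1) → A) (h : H),
        φ (SubalgDepth.mk Bsub n
            (fun i => if i = Fin.last n then sd.e (a i ⊗ₜ[k] h) else sd.e (a i ⊗ₜ[k] 1)))
          = ((({ V := A, ρ := ρ } : LVec k H).tprod n a) ⊗ₜ[k] h)) := by
  refine ⟨LinearEquiv.ofLinear (Fbar sd Bsub hB n) (psi sd Bsub hB n) ?_ ?_, ?_, ?_, ?_⟩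
  · exact LinearMap.ext fun x => right_inv sd Bsub hB n x
  · refine tp_hom_ext fun v => ?_
    show psi sd Bsub hB n (Fbar sd Bsub hB n (SubalgDepth.mk Bsub n v))
        = SubalgDepth.mk Bsub n v
    rw [Fbar_mk, left_inv]
  · intro h x
    have key : (Fbar sd Bsub hB n) ∘ₗ (SubalgDepth.Lmul Bsub n (sd.e ((1:A) ⊗ₜ[k] h)))
        = ((((WA ρ).tpow n).tmul (LVec.regular k H)).ρ h
            : TensorProduct k ((WA ρ).tpow n).V H →ₗ[k]
                TensorProduct k ((WA ρ).tpow n).V H) ∘ₗ (Fbar sd Bsub hB n) := by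
      refine tp_hom_ext fun v => ?_
      show Fbar sd Bsub hB n (SubalgDepth.Lmul Bsub n (sd.e ((1:A) ⊗ₜ[k] h))
          (SubalgDepth.mk Bsub n v))
        = (((WA ρ).tpow n).tmul (LVec.regular k H)).ρ h
            (Fbar sd Bsub hB n (SubalgDepth.mk Bsub n v))
      rw [Lmul_mk, Fbar_mk, Fbar_mk]
      exact Gf_lmul sd n v h
    exact LinearMap.congr_fun key x
  · intro h x
    have key : (Fbar sd Bsub hB n) ∘ₗ (SubalgDepth.Rmul Bsub n (sd.e ((1:A) ⊗ₜ[k] h)))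
        = (LinearMap.lTensor (((WA ρ).tpow n).V) (LinearMap.mulRight k h))
            ∘ₗ (Fbar sd Bsub hB n) := by
      refine tp_hom_ext fun v => ?_
      show Fbar sd Bsub hB n (SubalgDepth.Rmul Bsub n (sd.e ((1:A) ⊗ₜ[k] h))
          (SubalgDepth.mk Bsub n v))
        = LinearMap.lTensor (((WA ρ).tpow n).V) (LinearMap.mulRight k h)
            (Fbar sd Bsub hB n (SubalgDepth.mk Bsub n v))
      rw [Rmul_mk, Fbar_mk, Fbar_mk]
      exact Gf_rmul sd n v h
    exact LinearMap.congr_fun key x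
  · intro a h
    show Fbar sd Bsub hB n (SubalgDepth.mk Bsub n _) = _
    rw [Fbar_mk]
    exact Gf_pattern sd n a h

end SmashProof
open HopfModDepth Smash TensorProduct in
/-- for a Hopf algebra `H` and a left `H`-module algebra `A`, for every
`n ≥ 1` there is an `H`-`H`-bimodule isomorphism `(A # H)^{⊗_H n} ≅ A^{⊗n} ⊗ H`, where `H`
acts on the right-hand side on the left diagonally (via the iterated comultiplication,
through the module-algebra action on each `A`-factor and by left multiplication on the
`H`-factor) and on the right by right multiplication on the `H`-factor; the inverse
isomorphism is determined by `a₁ ⊗ ⋯ ⊗ aₙ ⊗ h ↦ (a₁#1) ⊗_H ⋯ ⊗_H (aₙ#h)`, which corresponds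
to the explicit formula `a#u ⊗ b#v ⊗ ⋯ ⊗ c#w ↦ a ⊗ u₍₁₎·b ⊗ ⋯ ⊗ u₍ₙ₎v₍ₙ₋₁₎⋯w`. -/
theorem tensor_powers_of_smash_product_over_hopf_algebra
    (k H A S : Type u) [Field k] [Ring H] [HopfAlgebra k H]
    [Ring A] [Algebra k A] [Ring S] [Algebra k S]
    (ρ : H →ₐ[k] Module.End k A) (hma : IsModuleAlgebra k H A ρ)
    (sd : SmashData k H A ρ S) :
    ∀ n : ℕ, ∀ Bsub : Subalgebra k S,
      (Bsub : Set S) = Set.range (fun h : H => sd.e ((1 : A) ⊗ₜ[k] h)) →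
      ∃ φ : SubalgDepth.TP Bsub n ≃ₗ[k]
          ((({ V := A, ρ := ρ } : LVec k H).tpow n).tmul (LVec.regular k H)).V,
        (∀ (h : H) (x : SubalgDepth.TP Bsub n),
          φ (SubalgDepth.Lmul Bsub n (sd.e ((1:A) ⊗ₜ[k] h)) x)
            = ((({ V := A, ρ := ρ } : LVec k H).tpow n).tmul (LVec.regular k H)).ρ h (φ x)) ∧
        (∀ (h : H) (x : SubalgDepth.TP Bsub n),
          φ (SubalgDepth.Rmul Bsub n (sd.e ((1:A) ⊗ₜ[k] h)) x)
            = (LinearMap.lTensor ((({ V := A, ρ := ρ } : LVec k H).tpow n).V)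
                (LinearMap.mulRight k h)) (φ x)) ∧
        (∀ (a : Fin (n+1) → A) (h : H),
          φ (SubalgDepth.mk Bsub n
              (fun i => if i = Fin.last n then sd.e (a i ⊗ₜ[k] h) else sd.e (a i ⊗ₜ[k] 1)))
            = (({ V := A, ρ := ρ } : LVec k H).tprod n a) ⊗ₜ[k] h) := by
  intro n Bsub hB
  exact SmashProof.tensor_powers_smash_aux sd n Bsub hB
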